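/- Suppose η_n → 0, √n·η_n → ∞, θ_n/η_n → ζ with |ζ| < 1, and √n·θ_n → ν ∈ ℝ. Then the distribution of √n(θ̂_H − θ_n) under P_{n,θ_n} converges weakly to point mass at −ν. -/

import Mathlib

open MeasureTheory ProbabilityTheory Real Filter Topology Set

noncomputable def stdGauss : Measure ℝ := gaussianReal 0 1

/-- Standard normal cdf. -/
noncomputable def Phi (x : ℝ) : ℝ := (stdGauss (Set.Iic x)).toReal

/-- Standard normal density. -/
noncomputable def phi (x : ℝ) : ℝ := gaussianPDFReal 0 1 x

/-- Hard-thresholding estimator. -/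
noncomputable def hardThresh (η y : ℝ) : ℝ := if η < |y| then y else 0

/-- Soft-thresholding (LASSO) estimator. -/
noncomputable def softThresh (η y : ℝ) : ℝ := Real.sign y * max (|y| - η) 0

/-- SCAD estimator. -/
noncomputable def scadThresh (a η y : ℝ) : ℝ :=
  if |y| ≤ 2 * η then Real.sign y * max (|y| - η) 0
  else if |y| ≤ a * η then ((a - 1) * y - Real.sign y * a * η) / (a - 2)
  else y

theorem stmt_14 (η θ : ℕ → ℝ) (hηpos : ∀ n, 0 < η n) (ζ ν : ℝ) (hζ : |ζ| < 1)
    (hη0 : Tendsto η atTop (𝓝 0))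
    (hηe : Tendsto (fun n : ℕ => Real.sqrt n * η n) atTop atTop)
    (hθζ : Tendsto (fun n => θ n / η n) atTop (𝓝 ζ))
    (hθν : Tendsto (fun n : ℕ => Real.sqrt n * θ n) atTop (𝓝 ν)) :
    ∀ f : BoundedContinuousFunction ℝ ℝ,
      Tendsto (fun n : ℕ => ∫ x, f x ∂(Measure.map
            (fun z => Real.sqrt n * (hardThresh (η n) (θ n + z / Real.sqrt n) - θ n)) stdGauss))
        atTop (𝓝 (∫ x, f x ∂(Measure.dirac (-ν) : Measure ℝ))) := by
  intro f
  set g : ℕ → ℝ → ℝ := fun n z =>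
    Real.sqrt n * (hardThresh (η n) (θ n + z / Real.sqrt n) - θ n) with hg
  have hmeas : ∀ n, Measurable (g n) := by
    intro n
    have h1 : Measurable (hardThresh (η n)) := by
      unfold hardThresh
      exact Measurable.ite (measurableSet_lt measurable_const measurable_id.abs)
        measurable_id measurable_const
    exact (measurable_const.mul (((h1.comp
      (measurable_const.add (measurable_id.div_const _))).sub measurable_const)))
  -- pointwise convergence of g n z to -ν
  have hpt : ∀ z : ℝ, Tendsto (fun n => g n z) atTop (𝓝 (-ν)) := by
    intro z
    have hratio : Tendsto (fun n : ℕ => (θ n + z / Real.sqrt n) / η n) atTop (𝓝 ζ) := by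
      have h2 : Tendsto (fun n : ℕ => z / (Real.sqrt n * η n)) atTop (𝓝 0) :=
        Tendsto.div_atTop tendsto_const_nhds hηe
      have := hθζ.add h2
      rw [add_zero] at this
      refine this.congr (fun n => ?_)
      rw [add_div, div_div]
    have hev : ∀ᶠ n in atTop, |θ n + z / Real.sqrt n| ≤ η n := by
      have : ∀ᶠ n in atTop, |(θ n + z / Real.sqrt n) / η n| < 1 := by
        have := hratio.abs
        exact this.eventually_lt_const hζ
      filter_upwards [this] with n hn
      have hηn := hηpos n
      rw [abs_div, abs_of_pos hηn, div_lt_one hηn] at hn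
      exact hn.le
    have hevg : ∀ᶠ n in atTop, g n z = -(Real.sqrt n * θ n) := by
      filter_upwards [hev] with n hn
      simp only [hg, hardThresh, if_neg (not_lt.mpr hn)]
      ring
    exact Tendsto.congr' (hevg.mono fun n h => h.symm) (hθν.neg)
  -- rewrite integrals
  have key : ∀ n : ℕ, ∫ x, f x ∂(Measure.map (g n) stdGauss) = ∫ z, f (g n z) ∂stdGauss := by
    intro n
    exact integral_map (hmeas n).aemeasurable f.continuous.aestronglyMeasurable
  simp only [key, integral_dirac]
  have : Tendsto (fun n : ℕ => ∫ z, f (g n z) ∂stdGauss) atTop (𝓝 (∫ z, f (-ν) ∂(stdGauss))) := by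
    refine tendsto_integral_of_dominated_convergence (fun _ => ‖f‖) ?_ ?_ ?_ ?_
    · exact fun n => (f.continuous.measurable.comp (hmeas n)).aestronglyMeasurable
    · have : IsProbabilityMeasure stdGauss := by unfold stdGauss; infer_instance
      exact integrable_const _
    · exact fun n => Eventually.of_forall fun z => f.norm_coe_le_norm _
    · exact Eventually.of_forall fun z => f.continuous.continuousAt.tendsto.comp (hpt z)
  have h2 := this.congr (fun n => (key n).symm)
  simpa [integral_const, stdGauss] using h2
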